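/- Let Ω ⊆ ℝ^N be non-empty and closed and let z ∈ ℝ^N be a point at which the nearest point p_Ω(z) ∈ Ω is unique. Then the squared distance function d_Ω²(x) = min_{y∈Ω} ‖x−y‖² is differentiable at z with gradient ∇d_Ω²(z) = 2(z − p_Ω(z)). -/

import Mathlib

open Metric

local notation "⟪" x ", " y "⟫" => @inner ℝ _ _ x y

/-- If the nearest point p of a nonempty closed set Ω ⊆ ℝ^N to z is unique, then the
squared distance function x ↦ d_Ω(x)² is differentiable at z with gradient
2(z − p). -/
theorem stmt_18 (N : ℕ) (Ω : Set (EuclideanSpace ℝ (Fin N)))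
    (hΩne : Ω.Nonempty) (hΩcl : IsClosed Ω)
    (z p : EuclideanSpace ℝ (Fin N)) (hp : p ∈ Ω)
    (hnear : ∀ y ∈ Ω, ‖z - p‖ ≤ ‖z - y‖)
    (huniq : ∀ y ∈ Ω, y ≠ p → ‖z - p‖ < ‖z - y‖) :
    HasGradientAt (fun x => (Metric.infDist x Ω) ^ 2) ((2 : ℝ) • (z - p)) z := by
  -- value of infDist at z
  have hdz : Metric.infDist z Ω = dist z p := by
    refine le_antisymm (Metric.infDist_le_dist_of_mem hp) ?_
    obtain ⟨q, hqΩ, hq⟩ := hΩcl.exists_infDist_eq_dist hΩne z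
    rw [hq, dist_eq_norm, dist_eq_norm]
    exact hnear q hqΩ
  -- continuity of the nearest point at z
  have key : ∀ ε > (0:ℝ), ∃ δ > (0:ℝ), ∀ x q, dist x z < δ → q ∈ Ω →
      dist x q = Metric.infDist x Ω → dist q p < ε := by
    intro ε hε
    set K : Set (EuclideanSpace ℝ (Fin N)) :=
      (Ω ∩ closedBall z (dist z p + 1)) \ ball p ε with hK
    have hKcl : IsClosed K :=
      (hΩcl.inter isClosed_closedBall).sdiff isOpen_ball
    have hKcp : IsCompact K := by
      refine (isCompact_closedBall z (dist z p + 1)).of_isClosed_subset hKcl ?_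
      intro y hy
      exact hy.1.2
    -- pick δ depending on whether K is empty
    rcases K.eq_empty_or_nonempty with hKe | hKne
    · refine ⟨1/2, by norm_num, ?_⟩
      intro x q hx hqΩ hq
      have h1 : dist x q ≤ dist x p := hq ▸ Metric.infDist_le_dist_of_mem hp
      have h2 : dist z q ≤ dist z p + 1 := by
        have := dist_triangle z x q
        have := dist_triangle x z p
        rw [dist_comm x z] at *
        linarith
      by_contra hcon
      have hqK : q ∈ K := ⟨⟨hqΩ, Metric.mem_closedBall.2 (by rwa [dist_comm])⟩,
        fun h => hcon (Metric.mem_ball.1 h)⟩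
      rw [hKe] at hqK
      exact hqK
    · obtain ⟨y₀, hy₀K, hy₀min⟩ := hKcp.exists_isMinOn hKne
        (continuous_const.dist continuous_id).continuousOn (f := fun y => dist z y)
      have hy₀Ω : y₀ ∈ Ω := hy₀K.1.1
      have hy₀ne : y₀ ≠ p := by
        intro h
        have : y₀ ∈ ball p ε := by
          rw [h]; exact Metric.mem_ball_self hε
        exact hy₀K.2 this
      have hm : dist z p < dist z y₀ := by
        rw [dist_eq_norm, dist_eq_norm]
        exact huniq y₀ hy₀Ω hy₀ne
      set m := dist z y₀ with hmdef
      refine ⟨min (1/2) ((m - dist z p)/2), lt_min (by norm_num) (by linarith), ?_⟩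
      intro x q hx hqΩ hq
      have hx1 : dist x z < 1/2 := lt_of_lt_of_le hx (min_le_left _ _)
      have hx2 : dist x z < (m - dist z p)/2 := lt_of_lt_of_le hx (min_le_right _ _)
      have h1 : dist x q ≤ dist x p := hq ▸ Metric.infDist_le_dist_of_mem hp
      have hxp : dist x p ≤ dist x z + dist z p := dist_triangle x z p
      have h2 : dist z q ≤ dist z x + dist x q := dist_triangle z x q
      rw [dist_comm z x] at h2
      have h3 : dist z q < dist z p + 1 := by linarith
      have h4 : dist z q < m := by linarith
      by_contra hcon
      have hqK : q ∈ K := ⟨⟨hqΩ, Metric.mem_closedBall.2 (by rw [dist_comm]; linarith)⟩,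
        fun h => hcon (Metric.mem_ball.1 h)⟩
      have := hy₀min hqK
      simp only [IsMinOn, Set.mem_setOf_eq] at this
      exact absurd h4 (not_lt.2 this)
  -- the little-o estimate
  rw [hasGradientAt_iff_isLittleO, Asymptotics.isLittleO_iff]
  intro c hc
  obtain ⟨δ, hδ, hδ'⟩ := key (c/2) (by linarith)
  rw [Metric.eventually_nhds_iff]
  refine ⟨min δ c, lt_min hδ hc, ?_⟩
  intro x hx
  have hxδ : dist x z < δ := lt_of_lt_of_le hx (min_le_left _ _)
  have hxc : dist x z < c := lt_of_lt_of_le hx (min_le_right _ _)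
  obtain ⟨q, hqΩ, hq⟩ := hΩcl.exists_infDist_eq_dist hΩne x
  have hqp : dist q p < c/2 := hδ' x q hxδ hqΩ hq.symm
  -- notation
  set h := x - z with hhdef
  have hnorm : ‖h‖ = dist x z := by rw [hhdef, dist_eq_norm]
  -- values of f
  have hfz : Metric.infDist z Ω ^ 2 = ‖z - p‖^2 := by rw [hdz, dist_eq_norm]
  have hfx : Metric.infDist x Ω ^ 2 = ‖x - q‖^2 := by rw [hq, dist_eq_norm]
  -- inner product of the gradient
  have hgrad : ⟪(2:ℝ) • (z - p), x - z⟫ = 2 * ⟪z - p, h⟫ := by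
    rw [real_inner_smul_left]
  -- upper bound
  have hup : Metric.infDist x Ω ^ 2 ≤ ‖h‖^2 + 2 * ⟪z - p, h⟫ + ‖z - p‖^2 := by
    have h1 : Metric.infDist x Ω ≤ dist x p := Metric.infDist_le_dist_of_mem hp
    have h2 : (0:ℝ) ≤ Metric.infDist x Ω := Metric.infDist_nonneg
    have h3 : Metric.infDist x Ω ^ 2 ≤ ‖x - p‖^2 := by
      rw [← dist_eq_norm]
      exact pow_le_pow_left₀ h2 h1 2
    have h4 : x - p = h + (z - p) := by rw [hhdef]; abel
    rw [h4, norm_add_sq_real] at h3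
    have h5 : ⟪h, z - p⟫ = ⟪z - p, h⟫ := real_inner_comm _ _
    linarith
  -- lower bound
  have hlow : ‖h‖^2 + 2 * ⟪h, z - q⟫ + ‖z - p‖^2 ≤ Metric.infDist x Ω ^ 2 := by
    have h4 : x - q = h + (z - q) := by rw [hhdef]; abel
    have h5 : ‖z - p‖ ≤ ‖z - q‖ := hnear q hqΩ
    have h6 : ‖z - p‖^2 ≤ ‖z - q‖^2 := pow_le_pow_left₀ (norm_nonneg _) h5 2
    rw [hfx, h4, norm_add_sq_real]
    linarith
  -- combine
  have hsplit : ⟪h, z - q⟫ = ⟪z - p, h⟫ + ⟪h, p - q⟫ := by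
    have : (z : EuclideanSpace ℝ (Fin N)) - q = (z - p) + (p - q) := by abel
    rw [this, inner_add_right, real_inner_comm h (z - p)]
  have hcs : |⟪h, p - q⟫| ≤ ‖h‖ * ‖p - q‖ := abs_real_inner_le_norm _ _
  have hpq : ‖p - q‖ < c/2 := by
    rw [← dist_eq_norm, dist_comm]; exact hqp
  have hnn : (0:ℝ) ≤ ‖h‖ := norm_nonneg _
  have hub2 : ‖h‖ * ‖p - q‖ ≤ ‖h‖ * (c/2) := by
    apply mul_le_mul_of_nonneg_left (le_of_lt hpq) hnn
  -- final bound
  have htarget : |Metric.infDist x Ω ^ 2 - Metric.infDist z Ω ^ 2 - ⟪(2:ℝ) • (z - p), x - z⟫|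
      ≤ c * ‖h‖ := by
    rw [hgrad, hfz]
    rw [abs_le]
    constructor
    · have := abs_le.1 hcs
      nlinarith [hlow, hsplit]
    · have hh : ‖h‖ ≤ c := by rw [hnorm]; exact le_of_lt hxc
      nlinarith [hup]
  calc ‖Metric.infDist x Ω ^ 2 - Metric.infDist z Ω ^ 2 - ⟪(2:ℝ) • (z - p), x - z⟫‖
      = |Metric.infDist x Ω ^ 2 - Metric.infDist z Ω ^ 2 - ⟪(2:ℝ) • (z - p), x - z⟫| := by
        rw [Real.norm_eq_abs]
    _ ≤ c * ‖h‖ := htarget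
    _ = c * ‖x - z‖ := by rw [hhdef]
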